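/- Let A ∈ M_n(ℂ) be tridiagonal (A_{jk} = 0 whenever |j − k| ≥ 2), let S ⊆ {1, …, n−1}, and let A' be the matrix obtained from A by interchanging the entries A_{j,j+1} and A_{j+1,j} for every j ∈ S, leaving all other entries unchanged. Then W(A) = W(A'). -/

import Mathlib

open Matrix Complex

noncomputable section

/-- The numerical range `W(A) = {⟨Ax, x⟩ : ‖x‖ = 1}` (here `⟨Ax, x⟩ = x* A x`). -/
def numRange {n : ℕ} (A : Matrix (Fin n) (Fin n) ℂ) : Set ℂ :=
  {z | ∃ x : Fin n → ℂ, star x ⬝ᵥ x = 1 ∧ star x ⬝ᵥ A.mulVec x = z}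

noncomputable def ph (z : ℂ) : ℂ := if z = 0 then 1 else z / ‖z‖

lemma ph_abs (z : ℂ) : ‖ph z‖ = 1 := by
  unfold ph
  split_ifs with h
  · simp
  · simp [norm_div, h]

lemma abs_mul_ph (z : ℂ) : ((‖z‖ : ℝ) : ℂ) * ph z = z := by
  unfold ph
  split_ifs with h
  · simp [h]
  · rw [mul_div_assoc', mul_comm, mul_div_assoc]
    simp [div_self (show ((‖z‖ : ℝ) : ℂ) ≠ 0 by exact_mod_cast norm_ne_zero_iff.mpr h)]

lemma conj_mul_self' (z : ℂ) : (starRingEnd ℂ) z * z = ((‖z‖ : ℝ) : ℂ)^2 := by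
  rw [mul_comm, Complex.mul_conj]
  norm_cast
  exact (Complex.sq_norm z).symm

lemma numRange_subset_aux {n : ℕ} (A A' : Matrix (Fin n) (Fin n) ℂ) (S : Set ℕ)
    (htri : ∀ j k : Fin n, ((j : ℕ) + 2 ≤ (k : ℕ) ∨ (k : ℕ) + 2 ≤ (j : ℕ)) → A j k = 0)
    (hswap : ∀ j k : Fin n,
      (((k : ℕ) = (j : ℕ) + 1 ∧ (j : ℕ) + 1 ∈ S) ∨
        ((j : ℕ) = (k : ℕ) + 1 ∧ (k : ℕ) + 1 ∈ S)) → A' j k = A k j)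
    (hkeep : ∀ j k : Fin n,
      ¬(((k : ℕ) = (j : ℕ) + 1 ∧ (j : ℕ) + 1 ∈ S) ∨
        ((j : ℕ) = (k : ℕ) + 1 ∧ (k : ℕ) + 1 ∈ S)) → A' j k = A j k) :
    numRange A ⊆ numRange A' := by
  classical
  rintro z ⟨x, hx1, hx2⟩
  -- extended vector
  set xx : ℕ → ℂ := fun j => if h : j < n then x ⟨j, h⟩ else 0 with hxxdef
  have hxxval : ∀ j : Fin n, xx (j : ℕ) = x j := by
    intro j; simp [hxxdef, j.isLt]
  -- phase increments
  set δ : ℕ → ℂ := fun j =>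
    if (j+1) ∈ S then (starRingEnd ℂ) (ph ((starRingEnd ℂ) (xx j) * xx (j+1)))
    else ph ((starRingEnd ℂ) (xx j) * xx (j+1)) with hδdef
  have hδabs : ∀ j, ‖δ j‖ = 1 := by
    intro j; simp only [hδdef]; split_ifs <;> simp [ph_abs]
  -- phase sequence
  let w : ℕ → ℂ := fun j => Nat.rec 1 (fun j wj => wj * δ j) j
  have hwsucc : ∀ j, w (j+1) = w j * δ j := fun j => rfl
  have hwabs : ∀ j, ‖w j‖ = 1 := by
    intro j; induction j with
    | zero => simp [w]
    | succ j ih => rw [hwsucc, norm_mul, ih, one_mul, hδabs]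
  set y : Fin n → ℂ := fun j => ((‖x j‖ : ℝ) : ℂ) * w (j : ℕ) with hydef
  have habsy : ∀ j : Fin n, ‖y j‖ = ‖x j‖ := by
    intro j
    simp only [hydef]
    rw [norm_mul, Complex.norm_real,
      norm_norm, hwabs, mul_one]
  have hnorm : ∀ j : Fin n, (starRingEnd ℂ) (y j) * y j = (starRingEnd ℂ) (x j) * x j := by
    intro j; rw [conj_mul_self', conj_mul_self', habsy]
  -- cross terms
  have hcross : ∀ j k : Fin n, (k : ℕ) = (j : ℕ) + 1 →
      (starRingEnd ℂ) (y j) * y k =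
        (((‖(starRingEnd ℂ) (x j) * x k‖ : ℝ)) : ℂ) * δ (j : ℕ) := by
    intro j k hk
    have hwk : w (k : ℕ) = w (j : ℕ) * δ (j : ℕ) := by rw [hk, hwsucc]
    simp only [hydef, hwk, _root_.map_mul, norm_mul, Complex.conj_ofReal]
    have h1 : (starRingEnd ℂ) (w (j:ℕ)) * w (j:ℕ) = 1 := by
      rw [conj_mul_self', hwabs]; norm_num
    rw [Complex.norm_conj]
    push_cast
    linear_combination (((‖x j‖ : ℝ) : ℂ) * ((‖x k‖ : ℝ) : ℂ)
      * δ (j:ℕ)) * h1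
  have hz : ∀ j k : Fin n, (k : ℕ) = (j : ℕ) + 1 →
      (starRingEnd ℂ) (xx (j:ℕ)) * xx ((j:ℕ)+1) = (starRingEnd ℂ) (x j) * x k := by
    intro j k hk; rw [hxxval, ← hk, hxxval]
  have hcrossS : ∀ j k : Fin n, (k : ℕ) = (j : ℕ) + 1 → ((j:ℕ)+1 ∈ S) →
      (starRingEnd ℂ) (y j) * y k = x j * (starRingEnd ℂ) (x k) := by
    intro j k hk hs
    rw [hcross j k hk]
    simp only [hδdef, if_pos hs, hz j k hk]
    have h3 := congrArg (starRingEnd ℂ) (abs_mul_ph ((starRingEnd ℂ) (x j) * x k))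
    simp only [_root_.map_mul, norm_mul, Complex.conj_ofReal, Complex.conj_conj, Complex.norm_conj,
      Complex.ofReal_mul] at h3 ⊢
    linear_combination h3
  have hcrossN : ∀ j k : Fin n, (k : ℕ) = (j : ℕ) + 1 → ((j:ℕ)+1 ∉ S) →
      (starRingEnd ℂ) (y j) * y k = (starRingEnd ℂ) (x j) * x k := by
    intro j k hk hs
    rw [hcross j k hk]
    simp only [hδdef, if_neg hs, hz j k hk]
    exact abs_mul_ph _
  -- key cross-term identity covering all cases needed
  have hkey : ∀ j k : Fin n, (starRingEnd ℂ) (y j) * y k = (starRingEnd ℂ) (x j) * x k ∨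
      True := fun _ _ => Or.inr trivial
  -- the permutation
  set P : Fin n × Fin n → Prop := fun p =>
    (((p.2 : ℕ) = (p.1 : ℕ) + 1 ∧ (p.1 : ℕ) + 1 ∈ S) ∨
      ((p.1 : ℕ) = (p.2 : ℕ) + 1 ∧ (p.2 : ℕ) + 1 ∈ S)) with hPdef
  have hPswap : ∀ p, P p → P (p.2, p.1) := by
    intro p hp; exact hp.symm
  set f : Fin n × Fin n → Fin n × Fin n := fun p => if P p then (p.2, p.1) else p with hfdef
  have hinv : Function.Involutive f := by
    intro p
    by_cases hp : P p
    · simp only [hfdef, if_pos hp, if_pos (hPswap p hp)]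
    · simp only [hfdef, if_neg hp]
  set e : Equiv.Perm (Fin n × Fin n) := hinv.toPerm with hedef
  have he : ∀ p, e p = f p := fun p => rfl
  refine ⟨y, ?_, ?_⟩
  · -- norm
    rw [show (1 : ℂ) = star x ⬝ᵥ x from hx1.symm]
    simp only [dotProduct, Pi.star_apply, RCLike.star_def]
    exact Finset.sum_congr rfl fun j _ => hnorm j
  · -- the main sum
    rw [← hx2]
    simp only [dotProduct, mulVec, Pi.star_apply, RCLike.star_def, Finset.mul_sum]
    rw [← Fintype.sum_prod_type', ← Fintype.sum_prod_type']
    refine Fintype.sum_equiv e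
      (fun p => (starRingEnd ℂ) (y p.1) * (A' p.1 p.2 * y p.2))
      (fun p => (starRingEnd ℂ) (x p.1) * (A p.1 p.2 * x p.2)) ?_
    rintro ⟨j, k⟩
    by_cases hp : P (j, k)
    · have hef : e (j, k) = (k, j) := by rw [he, hfdef]; exact if_pos hp
      rw [hef]
      show (starRingEnd ℂ) (y j) * (A' j k * y k) = (starRingEnd ℂ) (x k) * (A k j * x j)
      have hA : A' j k = A k j := hswap j k hp
      rw [hA]
      have key : (starRingEnd ℂ) (y j) * y k = (starRingEnd ℂ) (x k) * x j := by
        rcases hp with ⟨hk, hs⟩ | ⟨hj, hs⟩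
        · have := hcrossS j k hk hs
          linear_combination this
        · have := congrArg (starRingEnd ℂ) (hcrossS k j hj hs)
          simp only [_root_.map_mul, Complex.conj_conj] at this
          linear_combination this
      linear_combination A k j * key
    · have hef : e (j, k) = (j, k) := by rw [he, hfdef]; exact if_neg hp
      rw [hef]
      show (starRingEnd ℂ) (y j) * (A' j k * y k) = (starRingEnd ℂ) (x j) * (A j k * x k)
      have hA : A' j k = A j k := hkeep j k hp
      rw [hA]
      rcases Nat.lt_trichotomy (j : ℕ) (k : ℕ) with h | h | h
      · rcases Nat.lt_or_ge ((j:ℕ)+1) (k:ℕ) with h2 | h2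
        · rw [htri j k (Or.inl (by omega))]; ring
        · have hk : (k : ℕ) = (j : ℕ) + 1 := by omega
          have hs : (j : ℕ) + 1 ∉ S := by
            intro hs; exact hp (Or.inl ⟨hk, hs⟩)
          have := hcrossN j k hk hs
          linear_combination A j k * this
      · have : j = k := Fin.ext h
        subst this
        linear_combination A j j * hnorm j
      · rcases Nat.lt_or_ge ((k:ℕ)+1) (j:ℕ) with h2 | h2
        · rw [htri j k (Or.inr (by omega))]; ring
        · have hj : (j : ℕ) = (k : ℕ) + 1 := by omega
          have hs : (k : ℕ) + 1 ∉ S := by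
            intro hs; exact hp (Or.inr ⟨hj, hs⟩)
          have := congrArg (starRingEnd ℂ) (hcrossN k j hj hs)
          simp only [_root_.map_mul, Complex.conj_conj] at this
          linear_combination A j k * this

/-- Let `A` be tridiagonal and let `A'` be obtained from `A` by interchanging the opposing
off-diagonal entries `A_{j,j+1}` and `A_{j+1,j}` for every (1-based) index `j ∈ S`
(rows/columns of `Fin n` are 0-based, so the 1-based index of row `j : Fin n` is `j + 1`).
Then `W(A) = W(A')`. -/
theorem numRange_tridiag_swap {n : ℕ} (A A' : Matrix (Fin n) (Fin n) ℂ) (S : Set ℕ)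
    (hS : ∀ j ∈ S, 1 ≤ j ∧ j ≤ n - 1)
    (htri : ∀ j k : Fin n, ((j : ℕ) + 2 ≤ (k : ℕ) ∨ (k : ℕ) + 2 ≤ (j : ℕ)) → A j k = 0)
    (hswap : ∀ j k : Fin n,
      (((k : ℕ) = (j : ℕ) + 1 ∧ (j : ℕ) + 1 ∈ S) ∨
        ((j : ℕ) = (k : ℕ) + 1 ∧ (k : ℕ) + 1 ∈ S)) → A' j k = A k j)
    (hkeep : ∀ j k : Fin n,
      ¬(((k : ℕ) = (j : ℕ) + 1 ∧ (j : ℕ) + 1 ∈ S) ∨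
        ((j : ℕ) = (k : ℕ) + 1 ∧ (k : ℕ) + 1 ∈ S)) → A' j k = A j k) :
    numRange A = numRange A' := by
  have htri' : ∀ j k : Fin n, ((j : ℕ) + 2 ≤ (k : ℕ) ∨ (k : ℕ) + 2 ≤ (j : ℕ)) → A' j k = 0 := by
    intro j k h
    have hnp : ¬(((k : ℕ) = (j : ℕ) + 1 ∧ (j : ℕ) + 1 ∈ S) ∨
        ((j : ℕ) = (k : ℕ) + 1 ∧ (k : ℕ) + 1 ∈ S)) := by
      rintro (⟨hk, _⟩ | ⟨hj, _⟩) <;> omega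
    rw [hkeep j k hnp]; exact htri j k h
  have hswap' : ∀ j k : Fin n,
      (((k : ℕ) = (j : ℕ) + 1 ∧ (j : ℕ) + 1 ∈ S) ∨
        ((j : ℕ) = (k : ℕ) + 1 ∧ (k : ℕ) + 1 ∈ S)) → A j k = A' k j := by
    intro j k h
    exact (hswap k j h.symm).symm
  have hkeep' : ∀ j k : Fin n,
      ¬(((k : ℕ) = (j : ℕ) + 1 ∧ (j : ℕ) + 1 ∈ S) ∨
        ((j : ℕ) = (k : ℕ) + 1 ∧ (k : ℕ) + 1 ∈ S)) → A j k = A' j k := by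
    intro j k h
    exact (hkeep j k h).symm
  exact Set.Subset.antisymm
    (numRange_subset_aux A A' S htri hswap hkeep)
    (numRange_subset_aux A' A S htri' hswap' hkeep')
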